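/- (Theorem 5: limit points of the ADMM iteration are P-stationary and locally optimal.) Let ρ₁, ρ₂, ρ₃ > 0 and C > 0. Suppose sequences (w^k)ₖ, (d^k)ₖ in ℝ^L with d^k having nonnegative components, (b^k)ₖ in ℝ, (u^k)ₖ, (z^k)ₖ, (θ^k)ₖ, (α^k)ₖ, (λ^k)ₖ satisfy, for every k ∈ ℕ: (i) with s^k = 1 − 𝒜(d^k)w^k − b^k y − λ^k/ρ₁ and T_k = {i : 0 < s^k_i < √(2C/ρ₁)}, u^{k+1}_i = 0 for i ∈ T_k and u^{k+1}_i = s^k_i for i ∉ T_k; (ii) 𝒦(d^k)w^{k+1} + 𝒜(d^k)ᵀλ^k + ρ₁𝒜(d^k)ᵀ(u^{k+1} + 𝒜(d^k)w^{k+1} + b^k y − 1) = 0; (iii) b^{k+1} = −yᵀ[λ^k + ρ₁(u^{k+1} + 𝒜(d^k)w^{k+1} − 1)]/(mρ₁); (iv) with S_k = {ℓ : d^k_ℓ + θ^k_ℓ/ρ₂ > 0}, z^{k+1}_ℓ = d^k_ℓ + θ^k_ℓ/ρ₂ for ℓ ∈ S_k and z^{k+1}_ℓ = 0 for ℓ ∉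 S_k; (v) d^{k+1}_ℓ = 0 for ℓ ∉ S_k and, for every ℓ, (1/2)(w^{k+1})ᵀK_ℓ w^{k+1} + (λ^k)ᵀD_y K_ℓ w^{k+1} + ρ₁(D_y K_ℓ w^{k+1})ᵀ(u^{k+1} + b^{k+1}y − 1) + ρ₁(K_ℓ w^{k+1})ᵀ 𝒦(d^{k+1}) w^{k+1} + θ^k_ℓ + ρ₂(d^{k+1}_ℓ − z^{k+1}_ℓ) + α^k + ρ₃(1ᵀd^{k+1} − 1) = 0; (vi) θ^{k+1}_ℓ = θ^k_ℓ + ρ₂(d^{k+1}_ℓ − z^{k+1}_ℓ) for ℓ ∈ S_k and θ^{k+1}_ℓ = θ^k_ℓ for ℓ ∉ S_k; (vii) α^{k+1} = α^k + ρ₃(1ᵀd^{k+1} − 1); (viii) with r^{k+1} = u^{k+1} + 𝒜(d^{k+1})w^{k+1} + b^{k+1}y − 1, λ^{k+1}_i = λ^k_i + ρ₁ r^{k+1}_i for i ∈ T_k and λ^{k+1}_i = 0 for i ∉ T_k. If the sequence (w^k, d^k, b^k, u^k, z^k, θ^k, α^k, λ^k) converges to (w*, d*, b*, u*, z*, θ*,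 α*, λ*), then d* = z*, (w*, d*, b*, u*) is a P-stationary point with parameter γ = 1/ρ₁ and multipliers (−θ*, α*, λ*), and (w*, d*, b*, u*) is a local minimizer of the constrained problem: minimize (1/2)wᵀ𝒦(d)w + C‖u₊‖₀ over (w, d, b, u) subject to d ∈ Δ and u + 𝒜(d)w + by = 1. -/

import Mathlib

open Matrix

/-- `‖v₊‖₀`: the number of strictly positive components of `v`, as a real number. -/
noncomputable def l0pos {m : ℕ} (v : Fin m → ℝ) : ℝ :=
  ((Finset.univ.filter (fun i => 0 < v i)).card : ℝ)

/-- The conditions for `(w, d, b, u)` to be a P-stationary point with parameter `γ > 0`,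
with explicitly given multipliers `(θ, α, lam)`. -/
def IsPStationaryWith {m L : ℕ} (K : Fin L → Matrix (Fin m) (Fin m) ℝ)
    (y : Fin m → ℝ) (C γ : ℝ)
    (w : Fin m → ℝ) (d : Fin L → ℝ) (b : ℝ) (u : Fin m → ℝ)
    (θ : Fin L → ℝ) (α : ℝ) (lam : Fin m → ℝ) : Prop :=
  (∀ ℓ, 0 ≤ d ℓ) ∧
  (∑ ℓ, d ℓ) = 1 ∧
  (∀ ℓ, 0 ≤ θ ℓ) ∧
  (∀ ℓ, θ ℓ * d ℓ = 0) ∧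
  u + (Matrix.diagonal y * ∑ ℓ, d ℓ • K ℓ).mulVec w + b • y = 1 ∧
  w + (Matrix.diagonal y).mulVec lam = 0 ∧
  (∀ ℓ, -(1 / 2) * (w ⬝ᵥ (K ℓ).mulVec w) + α - θ ℓ = 0) ∧
  y ⬝ᵥ lam = 0 ∧
  ∀ v : Fin m → ℝ,
    C * l0pos u + (1 / (2 * γ)) * ∑ i, (u i - (u i - γ * lam i)) ^ 2 ≤
    C * l0pos v + (1 / (2 * γ)) * ∑ i, (v i - (u i - γ * lam i)) ^ 2

/-- `(w, d, b, u)` is a P-stationary point with parameter `γ > 0`. -/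
def IsPStationary {m L : ℕ} (K : Fin L → Matrix (Fin m) (Fin m) ℝ)
    (y : Fin m → ℝ) (C γ : ℝ)
    (w : Fin m → ℝ) (d : Fin L → ℝ) (b : ℝ) (u : Fin m → ℝ) : Prop :=
  ∃ (θ : Fin L → ℝ) (α : ℝ) (lam : Fin m → ℝ),
    IsPStationaryWith K y C γ w d b u θ α lam

open Filter Topology


section ThmHelpers
open Filter Topology
variable {m L : ℕ}

lemma tendsto_succ' {β : Type*} [TopologicalSpace β] {f : ℕ → β} {a : β}
    (h : Tendsto f atTop (𝓝 a)) : Tendsto (fun k => f (k + 1)) atTop (𝓝 a) :=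
  h.comp (tendsto_add_atTop_nat 1)

lemma lim_eq_freq {P : ℕ → Prop} (hP : ∃ᶠ k in atTop, P k)
    {f g : ℕ → ℝ} {a c : ℝ} (hf : Tendsto f atTop (𝓝 a)) (hg : Tendsto g atTop (𝓝 c))
    (h : ∀ k, P k → f k = g k) : a = c := by
  haveI hne : Filter.NeBot ((atTop : Filter ℕ) ⊓ 𝓟 {k | P k}) := frequently_iff_neBot.mp hP
  have hev : f =ᶠ[(atTop : Filter ℕ) ⊓ 𝓟 {k | P k}] g :=
    eventually_inf_principal.mpr (Eventually.of_forall h)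
  exact tendsto_nhds_unique ((hf.mono_left inf_le_left).congr' hev) (hg.mono_left inf_le_left)

lemma lim_le_freq {P : ℕ → Prop} (hP : ∃ᶠ k in atTop, P k)
    {f g : ℕ → ℝ} {a c : ℝ} (hf : Tendsto f atTop (𝓝 a)) (hg : Tendsto g atTop (𝓝 c))
    (h : ∀ k, P k → f k ≤ g k) : a ≤ c := by
  haveI hne : Filter.NeBot ((atTop : Filter ℕ) ⊓ 𝓟 {k | P k}) := frequently_iff_neBot.mp hP
  have hev : ∀ᶠ k in (atTop : Filter ℕ) ⊓ 𝓟 {k | P k}, f k ≤ g k :=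
    eventually_inf_principal.mpr (Eventually.of_forall h)
  exact le_of_tendsto_of_tendsto (hf.mono_left inf_le_left) (hg.mono_left inf_le_left) hev

lemma lim_eq_ev {f g : ℕ → ℝ} {a c : ℝ} (hf : Tendsto f atTop (𝓝 a)) (hg : Tendsto g atTop (𝓝 c))
    (h : ∀ᶠ k in atTop, f k = g k) : a = c :=
  tendsto_nhds_unique (hf.congr' h) hg

lemma lim_le_ev {f g : ℕ → ℝ} {a c : ℝ} (hf : Tendsto f atTop (𝓝 a)) (hg : Tendsto g atTop (𝓝 c))
    (h : ∀ᶠ k in atTop, f k ≤ g k) : a ≤ c :=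
  le_of_tendsto_of_tendsto hf hg h

lemma tendsto_dotProd {f g : ℕ → Fin m → ℝ} {a c : Fin m → ℝ}
    (hf : Tendsto f atTop (𝓝 a)) (hg : Tendsto g atTop (𝓝 c)) :
    Tendsto (fun k => f k ⬝ᵥ g k) atTop (𝓝 (a ⬝ᵥ c)) := by
  simp only [dotProduct]
  exact tendsto_finset_sum _ fun i _ =>
    ((tendsto_pi_nhds.mp hf i).mul (tendsto_pi_nhds.mp hg i))

lemma tendsto_mulVecc (M : Matrix (Fin m) (Fin m) ℝ) {f : ℕ → Fin m → ℝ} {a : Fin m → ℝ}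
    (hf : Tendsto f atTop (𝓝 a)) :
    Tendsto (fun k => M.mulVec (f k)) atTop (𝓝 (M.mulVec a)) := by
  refine tendsto_pi_nhds.mpr fun i => ?_
  simp only [Matrix.mulVec, dotProduct]
  exact tendsto_finset_sum _ fun j _ => tendsto_const_nhds.mul (tendsto_pi_nhds.mp hf j)

lemma tendsto_comp2 {X : Type*} [TopologicalSpace X]
    {F : (Fin L → ℝ) × (Fin m → ℝ) → X} (hF : Continuous F)
    {f : ℕ → Fin L → ℝ} {g : ℕ → Fin m → ℝ} {a : Fin L → ℝ} {b : Fin m → ℝ}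
    (hf : Tendsto f atTop (𝓝 a)) (hg : Tendsto g atTop (𝓝 b)) :
    Tendsto (fun k => F (f k, g k)) atTop (𝓝 (F (a, b))) := by
  have hp : Tendsto (fun k => (f k, g k)) atTop (𝓝 (a, b)) := by
    rw [nhds_prod_eq]; exact hf.prodMk hg
  simpa only [Function.comp_def] using (hF.tendsto (a, b)).comp hp

lemma cont_Kd (K : Fin L → Matrix (Fin m) (Fin m) ℝ) :
    Continuous (fun p : (Fin L → ℝ) × (Fin m → ℝ) => (∑ ℓ, p.1 ℓ • K ℓ).mulVec p.2) := by
  apply continuous_pi; intro i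
  simp only [Matrix.mulVec, dotProduct, Matrix.sum_apply, Matrix.smul_apply,
    smul_eq_mul, Finset.sum_mul]
  fun_prop

lemma cont_Ad (y : Fin m → ℝ) (K : Fin L → Matrix (Fin m) (Fin m) ℝ) :
    Continuous (fun p : (Fin L → ℝ) × (Fin m → ℝ) =>
      (Matrix.diagonal y * ∑ ℓ, p.1 ℓ • K ℓ).mulVec p.2) := by
  have h : ∀ p : (Fin L → ℝ) × (Fin m → ℝ),
      (Matrix.diagonal y * ∑ ℓ, p.1 ℓ • K ℓ).mulVec p.2
        = (Matrix.diagonal y).mulVec ((∑ ℓ, p.1 ℓ • K ℓ).mulVec p.2) := by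
    intro p; rw [← Matrix.mulVec_mulVec]
  simp only [h]
  apply continuous_pi; intro i
  simp only [Matrix.mulVec_diagonal]
  exact (continuous_const.mul ((continuous_apply i).comp (cont_Kd K)))

lemma cont_AdT (y : Fin m → ℝ) (K : Fin L → Matrix (Fin m) (Fin m) ℝ) :
    Continuous (fun p : (Fin L → ℝ) × (Fin m → ℝ) =>
      ((Matrix.diagonal y * ∑ ℓ, p.1 ℓ • K ℓ)ᵀ).mulVec p.2) := by
  apply continuous_pi; intro i
  simp only [Matrix.mulVec, dotProduct, Matrix.transpose_apply, Matrix.mul_apply,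
    Matrix.diagonal_apply, Matrix.sum_apply, Matrix.smul_apply, smul_eq_mul,
    Finset.sum_mul, Finset.mul_sum]
  fun_prop

lemma sum_smul_mulVec (K : Fin L → Matrix (Fin m) (Fin m) ℝ) (c : Fin L → ℝ) (x : Fin m → ℝ) :
    (∑ ℓ, c ℓ • K ℓ).mulVec x = ∑ ℓ, c ℓ • ((K ℓ).mulVec x) := by
  ext i
  simp only [Matrix.mulVec, dotProduct, Matrix.sum_apply, Matrix.smul_apply, smul_eq_mul,
    Finset.sum_apply, Pi.smul_apply, Finset.sum_mul]
  rw [Finset.sum_comm]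
  exact Finset.sum_congr rfl fun ℓ _ => by
    rw [Finset.mul_sum]; exact Finset.sum_congr rfl fun j _ => by ring

lemma quad_sum (K : Fin L → Matrix (Fin m) (Fin m) ℝ) (c : Fin L → ℝ) (v x : Fin m → ℝ) :
    v ⬝ᵥ (∑ ℓ, c ℓ • K ℓ).mulVec x = ∑ ℓ, c ℓ * (v ⬝ᵥ (K ℓ).mulVec x) := by
  rw [sum_smul_mulVec]
  simp only [dotProduct, Finset.sum_apply, Pi.smul_apply, smul_eq_mul, Finset.mul_sum]
  rw [Finset.sum_comm]
  exact Finset.sum_congr rfl fun ℓ _ => Finset.sum_congr rfl fun i _ => by ring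

lemma quad_nonneg {M : Matrix (Fin m) (Fin m) ℝ} (hM : M.PosSemidef) (x : Fin m → ℝ) :
    0 ≤ x ⬝ᵥ M.mulVec x := by simpa using hM.dotProduct_mulVec_nonneg x

lemma dot_mulVec_comm {M : Matrix (Fin m) (Fin m) ℝ} (hM : Mᵀ = M) (a c : Fin m → ℝ) :
    a ⬝ᵥ M.mulVec c = c ⬝ᵥ M.mulVec a := by
  simp only [dotProduct, Matrix.mulVec, Finset.mul_sum]
  rw [Finset.sum_comm]
  refine Finset.sum_congr rfl fun i _ => Finset.sum_congr rfl fun j _ => ?_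
  have h2 : M j i = M i j := congrFun (congrFun hM i) j
  rw [h2]; ring

lemma sumK_posDef (K : Fin L → Matrix (Fin m) (Fin m) ℝ) (hK : ∀ ℓ, (K ℓ).PosDef)
    (c : Fin L → ℝ) (hc : ∀ ℓ, 0 ≤ c ℓ) (hsum : (∑ ℓ, c ℓ) = 1) :
    (∑ ℓ, c ℓ • K ℓ).PosDef := by
  obtain ⟨ℓ₀, -, hℓ₀⟩ : ∃ ℓ ∈ Finset.univ, 0 < c ℓ := by
    by_contra hcon
    push_neg at hcon
    have h0 : (∑ ℓ, c ℓ) = 0 := Finset.sum_eq_zero fun ℓ hℓ =>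
      le_antisymm (hcon ℓ hℓ) (hc ℓ)
    rw [h0] at hsum; norm_num at hsum
  refine Matrix.PosDef.of_dotProduct_mulVec_pos ?_ ?_
  · unfold Matrix.IsHermitian
    rw [Matrix.conjTranspose_sum]
    exact Finset.sum_congr rfl fun ℓ _ => by
      rw [Matrix.conjTranspose_smul]
      rw [(hK ℓ).1]
      simp
  · intro x hx
    have hq : (star x) ⬝ᵥ (∑ ℓ, c ℓ • K ℓ).mulVec x = ∑ ℓ, c ℓ * (x ⬝ᵥ (K ℓ).mulVec x) := by
      simpa using quad_sum K c x x
    rw [hq]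
    refine Finset.sum_pos' (fun ℓ _ => mul_nonneg (hc ℓ) (quad_nonneg (hK ℓ).posSemidef x)) ?_
    refine ⟨ℓ₀, Finset.mem_univ _, mul_pos hℓ₀ ?_⟩
    have h3 := (hK ℓ₀).dotProduct_mulVec_pos hx
    simpa using h3

lemma l0pos_eq_sum (v : Fin m → ℝ) (C : ℝ) :
    C * l0pos v = ∑ i, (if 0 < v i then C else 0) := by
  rw [l0pos, ← Finset.sum_filter, Finset.sum_const, nsmul_eq_mul, mul_comm]

lemma diag_mul_mulVec (y v : Fin m → ℝ) (N : Matrix (Fin m) (Fin m) ℝ) (i : Fin m) :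
    ((Matrix.diagonal y * N).mulVec v) i = y i * (N.mulVec v) i := by
  rw [← Matrix.mulVec_mulVec]
  simp [Matrix.mulVec_diagonal]

lemma prox_pointwise (C ρ₁ uu ll a v : ℝ) (hC : 0 < C) (hρ₁ : 0 < ρ₁)
    (ha : a = uu - ll / ρ₁)
    (hcase : (uu = 0 ∧ 0 ≤ a ∧ a ≤ Real.sqrt (2 * C / ρ₁))
       ∨ (ll = 0 ∧ (a ≤ 0 ∨ Real.sqrt (2 * C / ρ₁) ≤ a))) :
    (if 0 < uu then C else 0) + (ρ₁ / 2) * (uu - a) ^ 2 ≤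
    (if 0 < v then C else 0) + (ρ₁ / 2) * (v - a) ^ 2 := by
  have hs : Real.sqrt (2 * C / ρ₁) ^ 2 = 2 * C / ρ₁ :=
    Real.sq_sqrt (by positivity)
  rcases hcase with ⟨hu0, ha0, haU⟩ | ⟨hl0, hcase⟩
  · subst hu0
    have ha2 : a ^ 2 ≤ 2 * C / ρ₁ := by
      nlinarith [Real.sqrt_nonneg (2 * C / ρ₁)]
    rw [if_neg (lt_irrefl (0:ℝ))]
    have key : ρ₁ / 2 * (2 * C / ρ₁) = C := by field_simp
    by_cases hv : 0 < v
    · rw [if_pos hv]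
      have hle : (ρ₁ / 2) * a ^ 2 ≤ C := by
        calc (ρ₁ / 2) * a ^ 2 ≤ ρ₁ / 2 * (2 * C / ρ₁) :=
              mul_le_mul_of_nonneg_left ha2 (by positivity)
          _ = C := key
      nlinarith [sq_nonneg (v - a)]
    · rw [if_neg hv]
      push_neg at hv
      have h2 : (0 - a) ^ 2 ≤ (v - a) ^ 2 := by
        nlinarith [mul_nonneg (neg_nonneg.mpr hv) ha0, sq_nonneg v]
      have h3 := mul_le_mul_of_nonneg_left h2 (le_of_lt (half_pos hρ₁))
      simp only [div_eq_mul_inv] at *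
      nlinarith [h3]
  · subst hl0
    have hau : a = uu := by rw [ha]; ring
    subst hau
    simp only [sub_self]
    rcases hcase with hle | hge
    · have hna : ¬ 0 < a := not_lt.mpr hle
      rw [if_neg hna]
      have h1 : (0:ℝ) ≤ (if 0 < v then C else 0) := by split_ifs <;> linarith
      nlinarith [sq_nonneg (v - a)]
    · have hsn : 0 ≤ Real.sqrt (2 * C / ρ₁) := Real.sqrt_nonneg _
      have ha2 : 2 * C / ρ₁ ≤ a ^ 2 := by nlinarith
      have key : ρ₁ / 2 * (2 * C / ρ₁) = C := by field_simp
      have hC2 : C ≤ (ρ₁ / 2) * a ^ 2 := by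
        calc C = ρ₁ / 2 * (2 * C / ρ₁) := key.symm
          _ ≤ (ρ₁ / 2) * a ^ 2 := mul_le_mul_of_nonneg_left ha2 (by positivity)
      by_cases hv : 0 < v
      · rw [if_pos hv]
        by_cases hu : 0 < a
        · rw [if_pos hu]; nlinarith [sq_nonneg (v - a)]
        · rw [if_neg hu]; nlinarith [sq_nonneg (v - a)]
      · push_neg at hv
        rw [if_neg (not_lt.mpr hv)]
        by_cases hu : 0 < a
        · rw [if_pos hu]
          have h2 : a ^ 2 ≤ (v - a) ^ 2 := by
            nlinarith [mul_nonneg (neg_nonneg.mpr hv) (le_of_lt hu), sq_nonneg v]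
          have h3 := mul_le_mul_of_nonneg_left h2 (le_of_lt (half_pos hρ₁))
          nlinarith [h3]
        · rw [if_neg hu]
          nlinarith [sq_nonneg (v - a)]

end ThmHelpers


set_option maxHeartbeats 2000000 in
/-- Theorem 5: if the ADMM iterates converge, the limit point is a P-stationary point
(with `γ = 1/ρ₁` and multipliers `(−θ*, α*, λ*)`) and a local minimizer of the
constrained MKL-L₀/₁-SVM problem. -/
theorem stmt_16 (m L : ℕ) (hm : 1 ≤ m) (hL : 1 ≤ L)
    (y : Fin m → ℝ) (hy : ∀ i, y i = 1 ∨ y i = -1)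
    (K : Fin L → Matrix (Fin m) (Fin m) ℝ) (hK : ∀ ℓ, (K ℓ).PosDef)
    (C : ℝ) (hC : 0 < C)
    (ρ₁ ρ₂ ρ₃ : ℝ) (hρ₁ : 0 < ρ₁) (hρ₂ : 0 < ρ₂) (hρ₃ : 0 < ρ₃)
    -- the ADMM iterates
    (w u lam : ℕ → Fin m → ℝ) (d z θ : ℕ → Fin L → ℝ) (b α : ℕ → ℝ)
    (hd_nonneg : ∀ k ℓ, 0 ≤ d k ℓ)
    -- auxiliary quantities
    (s : ℕ → Fin m → ℝ)
    (hs : ∀ k, s k =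
      1 - (Matrix.diagonal y * ∑ ℓ, d k ℓ • K ℓ).mulVec (w k) - b k • y - ρ₁⁻¹ • lam k)
    (r : ℕ → Fin m → ℝ)
    (hr : ∀ k, r k =
      u k + (Matrix.diagonal y * ∑ ℓ, d k ℓ • K ℓ).mulVec (w k) + b k • y - 1)
    -- (i) update of u via the working set T_k
    (hu : ∀ k i, (0 < s k i ∧ s k i < Real.sqrt (2 * C / ρ₁)) → u (k + 1) i = 0)
    (hu' : ∀ k i, ¬(0 < s k i ∧ s k i < Real.sqrt (2 * C / ρ₁)) → u (k + 1) i = s k i)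
    -- (ii) stationary-point equation for w
    (hw : ∀ k,
      (∑ ℓ, d k ℓ • K ℓ).mulVec (w (k + 1)) +
      (Matrix.diagonal y * ∑ ℓ, d k ℓ • K ℓ)ᵀ.mulVec (lam k) +
      ρ₁ • (Matrix.diagonal y * ∑ ℓ, d k ℓ • K ℓ)ᵀ.mulVec
        (u (k + 1) + (Matrix.diagonal y * ∑ ℓ, d k ℓ • K ℓ).mulVec (w (k + 1)) +
          b k • y - 1) = 0)
    -- (iii) update of b
    (hb : ∀ k, b (k + 1) =
      -(y ⬝ᵥ (lam k + ρ₁ • (u (k + 1) +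
          (Matrix.diagonal y * ∑ ℓ, d k ℓ • K ℓ).mulVec (w (k + 1)) - 1))) / (m * ρ₁))
    -- (iv) update of z via the working set S_k
    (hz : ∀ k ℓ, 0 < d k ℓ + θ k ℓ / ρ₂ → z (k + 1) ℓ = d k ℓ + θ k ℓ / ρ₂)
    (hz' : ∀ k ℓ, ¬(0 < d k ℓ + θ k ℓ / ρ₂) → z (k + 1) ℓ = 0)
    -- (v) update of d
    (hd0 : ∀ k ℓ, ¬(0 < d k ℓ + θ k ℓ / ρ₂) → d (k + 1) ℓ = 0)
    (hdeq : ∀ k ℓ,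
      (1 / 2) * (w (k + 1) ⬝ᵥ (K ℓ).mulVec (w (k + 1))) +
      (lam k ⬝ᵥ (Matrix.diagonal y * K ℓ).mulVec (w (k + 1))) +
      ρ₁ * ((Matrix.diagonal y * K ℓ).mulVec (w (k + 1)) ⬝ᵥ
        (u (k + 1) + b (k + 1) • y - 1)) +
      ρ₁ * ((K ℓ).mulVec (w (k + 1)) ⬝ᵥ
        (∑ t, d (k + 1) t • K t).mulVec (w (k + 1))) +
      θ k ℓ + ρ₂ * (d (k + 1) ℓ - z (k + 1) ℓ) + α k +
      ρ₃ * ((∑ t, d (k + 1) t) - 1) = 0)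
    -- (vi) update of θ
    (hθ : ∀ k ℓ, 0 < d k ℓ + θ k ℓ / ρ₂ →
      θ (k + 1) ℓ = θ k ℓ + ρ₂ * (d (k + 1) ℓ - z (k + 1) ℓ))
    (hθ' : ∀ k ℓ, ¬(0 < d k ℓ + θ k ℓ / ρ₂) → θ (k + 1) ℓ = θ k ℓ)
    -- (vii) update of α
    (hα : ∀ k, α (k + 1) = α k + ρ₃ * ((∑ ℓ, d (k + 1) ℓ) - 1))
    -- (viii) update of λ via the working set T_k
    (hlam : ∀ k i, (0 < s k i ∧ s k i < Real.sqrt (2 * C / ρ₁)) →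
      lam (k + 1) i = lam k i + ρ₁ * r (k + 1) i)
    (hlam' : ∀ k i, ¬(0 < s k i ∧ s k i < Real.sqrt (2 * C / ρ₁)) →
      lam (k + 1) i = 0)
    -- convergence of the iterates
    (wstar ustar lamstar : Fin m → ℝ) (dstar zstar θstar : Fin L → ℝ) (bstar αstar : ℝ)
    (hwlim : Tendsto w atTop (𝓝 wstar))
    (hdlim : Tendsto d atTop (𝓝 dstar))
    (hblim : Tendsto b atTop (𝓝 bstar))
    (hulim : Tendsto u atTop (𝓝 ustar))
    (hzlim : Tendsto z atTop (𝓝 zstar))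
    (hθlim : Tendsto θ atTop (𝓝 θstar))
    (hαlim : Tendsto α atTop (𝓝 αstar))
    (hlamlim : Tendsto lam atTop (𝓝 lamstar)) :
    dstar = zstar ∧
    IsPStationaryWith K y C (1 / ρ₁) wstar dstar bstar ustar
      (fun ℓ => -θstar ℓ) αstar lamstar ∧
    ∃ δ > 0, ∀ (w' : Fin m → ℝ) (d' : Fin L → ℝ) (b' : ℝ) (u' : Fin m → ℝ),
      ((∀ ℓ, 0 ≤ d' ℓ) ∧ (∑ ℓ, d' ℓ) = 1 ∧
        u' + (Matrix.diagonal y * ∑ ℓ, d' ℓ • K ℓ).mulVec w' + b' • y = 1) →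
      dist ((w', d', b', u') : (Fin m → ℝ) × (Fin L → ℝ) × ℝ × (Fin m → ℝ))
        (wstar, dstar, bstar, ustar) < δ →
      (1 / 2) * (wstar ⬝ᵥ (∑ ℓ, dstar ℓ • K ℓ).mulVec wstar) + C * l0pos ustar ≤
      (1 / 2) * (w' ⬝ᵥ (∑ ℓ, d' ℓ • K ℓ).mulVec w') + C * l0pos u' := by
  -- basic facts about y
  have hy2 : ∀ i, y i * y i = 1 := fun i => by rcases hy i with h | h <;> rw [h] <;> norm_num
  have hKsymm : ∀ ℓ, (K ℓ)ᵀ = K ℓ := fun ℓ => by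
    have h := (hK ℓ).1
    rw [Matrix.IsHermitian] at h
    conv_rhs => rw [← h]
    ext i j
    simp [Matrix.conjTranspose_apply]
  -- componentwise limits
  have hwl : ∀ i, Tendsto (fun k => w k i) atTop (𝓝 (wstar i)) := fun i => tendsto_pi_nhds.mp hwlim i
  have hul : ∀ i, Tendsto (fun k => u k i) atTop (𝓝 (ustar i)) := fun i => tendsto_pi_nhds.mp hulim i
  have hlaml : ∀ i, Tendsto (fun k => lam k i) atTop (𝓝 (lamstar i)) := fun i => tendsto_pi_nhds.mp hlamlim i
  have hdl : ∀ ℓ, Tendsto (fun k => d k ℓ) atTop (𝓝 (dstar ℓ)) := fun ℓ => tendsto_pi_nhds.mp hdlim ℓ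
  have hzl : ∀ ℓ, Tendsto (fun k => z k ℓ) atTop (𝓝 (zstar ℓ)) := fun ℓ => tendsto_pi_nhds.mp hzlim ℓ
  have hθl : ∀ ℓ, Tendsto (fun k => θ k ℓ) atTop (𝓝 (θstar ℓ)) := fun ℓ => tendsto_pi_nhds.mp hθlim ℓ
  have hdsuml : Tendsto (fun k => ∑ ℓ, d k ℓ) atTop (𝓝 (∑ ℓ, dstar ℓ)) :=
    tendsto_finset_sum _ fun ℓ _ => hdl ℓ
  have hdnn : ∀ ℓ, 0 ≤ dstar ℓ := fun ℓ =>
    lim_le_ev tendsto_const_nhds (hdl ℓ) (Eventually.of_forall fun k => hd_nonneg k ℓ)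
  -- (E1) sum of dstar is 1
  have hsum1 : (∑ ℓ, dstar ℓ) = 1 := by
    have h1 : Tendsto (fun k => α (k + 1)) atTop (𝓝 αstar) := tendsto_succ' hαlim
    have h2 : Tendsto (fun k => α k + ρ₃ * ((∑ ℓ, d (k + 1) ℓ) - 1)) atTop
        (𝓝 (αstar + ρ₃ * ((∑ ℓ, dstar ℓ) - 1))) :=
      hαlim.add (tendsto_const_nhds.mul ((tendsto_succ' hdsuml).sub tendsto_const_nhds))
    have heq := lim_eq_ev h1 h2 (Eventually.of_forall fun k => hα k)
    have h0 : ρ₃ * ((∑ ℓ, dstar ℓ) - 1) = 0 := by linarith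
    rcases mul_eq_zero.mp h0 with h | h
    · exact absurd h hρ₃.ne'
    · linarith
  -- (E2) dichotomy in ℓ
  have hℓfacts : ∀ ℓ, dstar ℓ = zstar ℓ ∧ θstar ℓ ≤ 0 ∧ (θstar ℓ = 0 ∨ dstar ℓ = 0) := by
    intro ℓ
    by_cases hfreq : ∃ᶠ k in atTop, 0 < d k ℓ + θ k ℓ / ρ₂
    · have hz1 : zstar ℓ = dstar ℓ + θstar ℓ / ρ₂ :=
        lim_eq_freq hfreq (tendsto_succ' (hzl ℓ)) ((hdl ℓ).add ((hθl ℓ).div_const ρ₂))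
          (fun k hk => hz k ℓ hk)
      have hθ1 : θstar ℓ = θstar ℓ + ρ₂ * (dstar ℓ - zstar ℓ) :=
        lim_eq_freq hfreq (tendsto_succ' (hθl ℓ))
          ((hθl ℓ).add (tendsto_const_nhds.mul
            ((tendsto_succ' (hdl ℓ)).sub (tendsto_succ' (hzl ℓ)))))
          (fun k hk => hθ k ℓ hk)
      have hdzℓ : dstar ℓ = zstar ℓ := by
        have h0 : ρ₂ * (dstar ℓ - zstar ℓ) = 0 := by linarith
        rcases mul_eq_zero.mp h0 with h | h
        · exact absurd h hρ₂.ne'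
        · linarith
      have hθ0 : θstar ℓ = 0 := by
        have h0 : θstar ℓ / ρ₂ = 0 := by linarith
        rcases div_eq_zero_iff.mp h0 with h | h
        · exact h
        · exact absurd h hρ₂.ne'
      exact ⟨hdzℓ, le_of_eq hθ0, Or.inl hθ0⟩
    · have hev : ∀ᶠ k in atTop, ¬ (0 < d k ℓ + θ k ℓ / ρ₂) := not_frequently.mp hfreq
      have hz0 : zstar ℓ = 0 :=
        lim_eq_ev (tendsto_succ' (hzl ℓ)) tendsto_const_nhds (hev.mono fun k hk => hz' k ℓ hk)
      have hd0' : dstar ℓ = 0 :=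
        lim_eq_ev (tendsto_succ' (hdl ℓ)) tendsto_const_nhds (hev.mono fun k hk => hd0 k ℓ hk)
      have hle : dstar ℓ + θstar ℓ / ρ₂ ≤ 0 :=
        lim_le_ev ((hdl ℓ).add ((hθl ℓ).div_const ρ₂)) tendsto_const_nhds
          (hev.mono fun k hk => not_lt.mp hk)
      refine ⟨by rw [hz0, hd0'], ?_, Or.inr hd0'⟩
      by_contra hpos
      push_neg at hpos
      have : 0 < θstar ℓ / ρ₂ := div_pos hpos hρ₂
      linarith
  have hdz : dstar = zstar := funext fun ℓ => (hℓfacts ℓ).1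
  have hθnp : ∀ ℓ, θstar ℓ ≤ 0 := fun ℓ => (hℓfacts ℓ).2.1
  have hcompl3 : ∀ ℓ, θstar ℓ = 0 ∨ dstar ℓ = 0 := fun ℓ => (hℓfacts ℓ).2.2
  -- limits of the composite vector quantities
  have hAdw : Tendsto (fun k => (Matrix.diagonal y * ∑ ℓ, d k ℓ • K ℓ).mulVec (w k)) atTop
      (𝓝 ((Matrix.diagonal y * ∑ ℓ, dstar ℓ • K ℓ).mulVec wstar)) :=
    tendsto_comp2 (cont_Ad y K) hdlim hwlim
  have hAdw' : Tendsto (fun k => (Matrix.diagonal y * ∑ ℓ, d k ℓ • K ℓ).mulVec (w (k + 1))) atTop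
      (𝓝 ((Matrix.diagonal y * ∑ ℓ, dstar ℓ • K ℓ).mulVec wstar)) :=
    tendsto_comp2 (cont_Ad y K) hdlim (tendsto_succ' hwlim)
  set sst : Fin m → ℝ :=
    1 - (Matrix.diagonal y * ∑ ℓ, dstar ℓ • K ℓ).mulVec wstar - bstar • y - ρ₁⁻¹ • lamstar
    with hsst_def
  set rst : Fin m → ℝ :=
    ustar + (Matrix.diagonal y * ∑ ℓ, dstar ℓ • K ℓ).mulVec wstar + bstar • y - 1 with hrst_def
  have hslim : Tendsto s atTop (𝓝 sst) := by
    have hfe : s = fun k =>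
        1 - (Matrix.diagonal y * ∑ ℓ, d k ℓ • K ℓ).mulVec (w k) - b k • y - ρ₁⁻¹ • lam k :=
      funext hs
    rw [hfe, hsst_def]
    exact ((tendsto_const_nhds.sub hAdw).sub (hblim.smul_const y)).sub (hlamlim.const_smul ρ₁⁻¹)
  have hrlim : Tendsto r atTop (𝓝 rst) := by
    have hfe : r = fun k =>
        u k + (Matrix.diagonal y * ∑ ℓ, d k ℓ • K ℓ).mulVec (w k) + b k • y - 1 := funext hr
    rw [hfe, hrst_def]
    exact ((hulim.add hAdw).add (hblim.smul_const y)).sub tendsto_const_nhds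
  have hsl : ∀ i, Tendsto (fun k => s k i) atTop (𝓝 (sst i)) := fun i => tendsto_pi_nhds.mp hslim i
  have hrl : ∀ i, Tendsto (fun k => r k i) atTop (𝓝 (rst i)) := fun i => tendsto_pi_nhds.mp hrlim i
  -- componentwise identities for sst and rst
  have hsst_i : ∀ i, sst i =
      1 - ((Matrix.diagonal y * ∑ ℓ, dstar ℓ • K ℓ).mulVec wstar) i - bstar * y i
        - ρ₁⁻¹ * lamstar i := fun i => rfl
  have hrst_i : ∀ i, rst i =
      ustar i + ((Matrix.diagonal y * ∑ ℓ, dstar ℓ • K ℓ).mulVec wstar) i + bstar * y i - 1 :=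
    fun i => rfl
  -- (E4) dichotomy in i
  have hifacts : ∀ i, rst i = 0 ∧
      ((ustar i = 0 ∧ 0 ≤ sst i ∧ sst i ≤ Real.sqrt (2 * C / ρ₁)) ∨
       (lamstar i = 0 ∧ (sst i ≤ 0 ∨ Real.sqrt (2 * C / ρ₁) ≤ sst i))) := by
    intro i
    by_cases hfreq : ∃ᶠ k in atTop, (0 < s k i ∧ s k i < Real.sqrt (2 * C / ρ₁))
    · have hu0 : ustar i = 0 :=
        lim_eq_freq hfreq (tendsto_succ' (hul i)) tendsto_const_nhds (fun k hk => hu k i hk)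
      have hlam1 : lamstar i = lamstar i + ρ₁ * rst i :=
        lim_eq_freq hfreq (tendsto_succ' (hlaml i))
          ((hlaml i).add (tendsto_const_nhds.mul (tendsto_succ' (hrl i))))
          (fun k hk => hlam k i hk)
      have hr0 : rst i = 0 := by
        have h0 : ρ₁ * rst i = 0 := by linarith
        rcases mul_eq_zero.mp h0 with h | h
        · exact absurd h hρ₁.ne'
        · exact h
      have hs0 : 0 ≤ sst i :=
        lim_le_freq hfreq tendsto_const_nhds (hsl i) (fun k hk => hk.1.le)
      have hsU : sst i ≤ Real.sqrt (2 * C / ρ₁) :=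
        lim_le_freq hfreq (hsl i) tendsto_const_nhds (fun k hk => hk.2.le)
      exact ⟨hr0, Or.inl ⟨hu0, hs0, hsU⟩⟩
    · have hev : ∀ᶠ k in atTop, ¬ (0 < s k i ∧ s k i < Real.sqrt (2 * C / ρ₁)) :=
        not_frequently.mp hfreq
      have hl0 : lamstar i = 0 :=
        lim_eq_ev (tendsto_succ' (hlaml i)) tendsto_const_nhds
          (hev.mono fun k hk => hlam' k i hk)
      have hus : ustar i = sst i :=
        lim_eq_ev (tendsto_succ' (hul i)) (hsl i) (hev.mono fun k hk => hu' k i hk)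
      have hdisj : sst i ≤ 0 ∨ Real.sqrt (2 * C / ρ₁) ≤ sst i := by
        by_contra hcon
        push_neg at hcon
        obtain ⟨h1, h2⟩ := hcon
        have hio : ∀ᶠ k in atTop, s k i ∈ Set.Ioo (0:ℝ) (Real.sqrt (2 * C / ρ₁)) :=
          (hsl i).eventually (Ioo_mem_nhds h1 h2)
        obtain ⟨k, hk1, hk2⟩ := (hio.and hev).exists
        exact hk2 ⟨hk1.1, hk1.2⟩
      have hr0 : rst i = 0 := by
        rw [hrst_i i]
        rw [hsst_i i] at hus
        rw [hl0] at hus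
        linarith [hus]
      exact ⟨hr0, Or.inr ⟨hl0, hdisj⟩⟩
  have hrst0 : ∀ i, rst i = 0 := fun i => (hifacts i).1
  -- primal feasibility at the limit
  have hfeas_star : ustar + (Matrix.diagonal y * ∑ ℓ, dstar ℓ • K ℓ).mulVec wstar + bstar • y = 1 := by
    funext i
    have h0 := hrst0 i
    rw [hrst_i i] at h0
    show ustar i + ((Matrix.diagonal y * ∑ ℓ, dstar ℓ • K ℓ).mulVec wstar) i + bstar * y i = 1
    linarith
  have hsr : ∀ i, sst i = ustar i - lamstar i / ρ₁ := by
    intro i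
    have h0 := hrst0 i
    rw [hrst_i i] at h0
    rw [hsst_i i]
    rw [div_eq_inv_mul]
    linarith
  -- (E5): K(d*) w* + A(d*)T lam* = 0 and w* + D_y lam* = 0
  have hKstsymm : (∑ ℓ, dstar ℓ • K ℓ)ᵀ = ∑ ℓ, dstar ℓ • K ℓ := by
    rw [Matrix.transpose_sum]
    exact Finset.sum_congr rfl fun ℓ _ => by rw [Matrix.transpose_smul, hKsymm ℓ]
  have hinner : Tendsto (fun k =>
      u (k + 1) + (Matrix.diagonal y * ∑ ℓ, d k ℓ • K ℓ).mulVec (w (k + 1)) + b k • y - 1)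
      atTop (𝓝 rst) := by
    rw [hrst_def]
    exact (((tendsto_succ' hulim).add hAdw').add (hblim.smul_const y)).sub tendsto_const_nhds
  have hwlimit : (∑ ℓ, dstar ℓ • K ℓ).mulVec wstar
      + ((Matrix.diagonal y * ∑ ℓ, dstar ℓ • K ℓ)ᵀ).mulVec lamstar
      + ρ₁ • ((Matrix.diagonal y * ∑ ℓ, dstar ℓ • K ℓ)ᵀ).mulVec rst = 0 := by
    have hbig : Tendsto (fun k =>
        (∑ ℓ, d k ℓ • K ℓ).mulVec (w (k + 1)) +
        (Matrix.diagonal y * ∑ ℓ, d k ℓ • K ℓ)ᵀ.mulVec (lam k) +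
        ρ₁ • (Matrix.diagonal y * ∑ ℓ, d k ℓ • K ℓ)ᵀ.mulVec
          (u (k + 1) + (Matrix.diagonal y * ∑ ℓ, d k ℓ • K ℓ).mulVec (w (k + 1)) +
            b k • y - 1)) atTop
        (𝓝 ((∑ ℓ, dstar ℓ • K ℓ).mulVec wstar
          + ((Matrix.diagonal y * ∑ ℓ, dstar ℓ • K ℓ)ᵀ).mulVec lamstar
          + ρ₁ • ((Matrix.diagonal y * ∑ ℓ, dstar ℓ • K ℓ)ᵀ).mulVec rst)) := by
      refine Tendsto.add (Tendsto.add ?_ ?_) ?_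
      · exact tendsto_comp2 (cont_Kd K) hdlim (tendsto_succ' hwlim)
      · exact tendsto_comp2 (cont_AdT y K) hdlim hlamlim
      · exact (tendsto_comp2 (cont_AdT y K) hdlim hinner).const_smul ρ₁
    have h0 : Tendsto (fun _ : ℕ => (0 : Fin m → ℝ)) atTop
        (𝓝 ((∑ ℓ, dstar ℓ • K ℓ).mulVec wstar
          + ((Matrix.diagonal y * ∑ ℓ, dstar ℓ • K ℓ)ᵀ).mulVec lamstar
          + ρ₁ • ((Matrix.diagonal y * ∑ ℓ, dstar ℓ • K ℓ)ᵀ).mulVec rst)) :=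
      hbig.congr fun k => hw k
    exact tendsto_nhds_unique h0 tendsto_const_nhds
  have hrst_zero : rst = 0 := funext hrst0
  have hwlam : wstar + (Matrix.diagonal y).mulVec lamstar = 0 := by
    rw [hrst_zero] at hwlimit
    simp only [Matrix.mulVec_zero, smul_zero, add_zero] at hwlimit
    have hT : (Matrix.diagonal y * ∑ ℓ, dstar ℓ • K ℓ)ᵀ
        = (∑ ℓ, dstar ℓ • K ℓ) * Matrix.diagonal y := by
      rw [Matrix.transpose_mul, Matrix.diagonal_transpose, hKstsymm]
    rw [hT, ← Matrix.mulVec_mulVec, ← Matrix.mulVec_add] at hwlimit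
    have hPD := sumK_posDef K hK dstar hdnn hsum1
    by_contra hne
    have hpos := hPD.dotProduct_mulVec_pos hne
    rw [hwlimit] at hpos
    simp at hpos
  have hwlamc : ∀ i, wstar i + y i * lamstar i = 0 := by
    intro i
    have hc := congrFun hwlam i
    simpa [Matrix.mulVec_diagonal] using hc
  -- (E6): yT lam* = 0
  have hyl : y ⬝ᵥ lamstar = 0 := by
    have hyy : y ⬝ᵥ y = (m : ℝ) := by
      rw [dotProduct, Finset.sum_congr rfl (fun i _ => hy2 i)]
      simp [Finset.card_univ]
    have hrhs : Tendsto (fun k =>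
        -(y ⬝ᵥ (lam k + ρ₁ • (u (k + 1) +
          (Matrix.diagonal y * ∑ ℓ, d k ℓ • K ℓ).mulVec (w (k + 1)) - 1))) / (m * ρ₁)) atTop
        (𝓝 (-(y ⬝ᵥ (lamstar + ρ₁ • (ustar +
          (Matrix.diagonal y * ∑ ℓ, dstar ℓ • K ℓ).mulVec wstar - 1))) / (m * ρ₁))) := by
      refine Tendsto.div_const (Tendsto.neg ?_) _
      exact tendsto_dotProd tendsto_const_nhds
        (hlamlim.add ((((tendsto_succ' hulim).add hAdw').sub tendsto_const_nhds).const_smul ρ₁))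
    have hbeq := lim_eq_ev (tendsto_succ' hblim) hrhs (Eventually.of_forall fun k => hb k)
    have hu1 : ustar + (Matrix.diagonal y * ∑ ℓ, dstar ℓ • K ℓ).mulVec wstar - 1
        = (-bstar) • y := by
      funext i
      have h0 := hrst0 i
      rw [hrst_i i] at h0
      show ustar i + ((Matrix.diagonal y * ∑ ℓ, dstar ℓ • K ℓ).mulVec wstar) i - 1
        = -bstar * y i
      linarith
    rw [hu1, smul_smul, dotProduct_add, dotProduct_smul, smul_eq_mul, hyy] at hbeq
    have hm0 : (0:ℝ) < m := by exact_mod_cast Nat.lt_of_lt_of_le Nat.zero_lt_one hm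
    rw [eq_div_iff (ne_of_gt (mul_pos hm0 hρ₁))] at hbeq
    ring_nf at hbeq
    linarith
  -- (E7): stationarity in d
  have hstat : ∀ ℓ, -(1 / 2) * (wstar ⬝ᵥ (K ℓ).mulVec wstar) + αstar - (-θstar ℓ) = 0 := by
    intro ℓ
    have hbig : Tendsto (fun k =>
        (1 / 2) * (w (k + 1) ⬝ᵥ (K ℓ).mulVec (w (k + 1))) +
        (lam k ⬝ᵥ (Matrix.diagonal y * K ℓ).mulVec (w (k + 1))) +
        ρ₁ * ((Matrix.diagonal y * K ℓ).mulVec (w (k + 1)) ⬝ᵥ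
          (u (k + 1) + b (k + 1) • y - 1)) +
        ρ₁ * ((K ℓ).mulVec (w (k + 1)) ⬝ᵥ
          (∑ t, d (k + 1) t • K t).mulVec (w (k + 1))) +
        θ k ℓ + ρ₂ * (d (k + 1) ℓ - z (k + 1) ℓ) + α k +
        ρ₃ * ((∑ t, d (k + 1) t) - 1)) atTop
        (𝓝 ((1 / 2) * (wstar ⬝ᵥ (K ℓ).mulVec wstar) +
        (lamstar ⬝ᵥ (Matrix.diagonal y * K ℓ).mulVec wstar) +
        ρ₁ * ((Matrix.diagonal y * K ℓ).mulVec wstar ⬝ᵥ (ustar + bstar • y - 1)) +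
        ρ₁ * ((K ℓ).mulVec wstar ⬝ᵥ (∑ t, dstar t • K t).mulVec wstar) +
        θstar ℓ + ρ₂ * (dstar ℓ - zstar ℓ) + αstar +
        ρ₃ * ((∑ t, dstar t) - 1))) := by
      refine ((((((Tendsto.add ?_ ?_).add ?_).add ?_).add (hθl ℓ)).add ?_).add hαlim).add ?_
      · exact tendsto_const_nhds.mul
          (tendsto_dotProd (tendsto_succ' hwlim) (tendsto_mulVecc _ (tendsto_succ' hwlim)))
      · exact tendsto_dotProd hlamlim (tendsto_mulVecc _ (tendsto_succ' hwlim))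
      · exact tendsto_const_nhds.mul (tendsto_dotProd (tendsto_mulVecc _ (tendsto_succ' hwlim))
          (((tendsto_succ' hulim).add ((tendsto_succ' hblim).smul_const y)).sub
            tendsto_const_nhds))
      · exact tendsto_const_nhds.mul (tendsto_dotProd (tendsto_mulVecc _ (tendsto_succ' hwlim))
          (tendsto_comp2 (cont_Kd K) (tendsto_succ' hdlim) (tendsto_succ' hwlim)))
      · exact tendsto_const_nhds.mul
          ((tendsto_succ' (hdl ℓ)).sub (tendsto_succ' (hzl ℓ)))
      · exact tendsto_const_nhds.mul ((tendsto_succ' hdsuml).sub tendsto_const_nhds)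
    have heq0 := lim_eq_ev hbig tendsto_const_nhds (Eventually.of_forall fun k => hdeq k ℓ)
    have e1 : ρ₂ * (dstar ℓ - zstar ℓ) = 0 := by rw [(hℓfacts ℓ).1]; ring
    have e2 : ρ₃ * ((∑ t, dstar t) - 1) = 0 := by rw [hsum1]; ring
    have hvec : ustar + bstar • y - (1 : Fin m → ℝ)
        = -(Matrix.diagonal y * ∑ t, dstar t • K t).mulVec wstar := by
      funext i
      have h0 := hrst0 i
      rw [hrst_i i] at h0
      show ustar i + bstar * y i - 1
        = -((Matrix.diagonal y * ∑ t, dstar t • K t).mulVec wstar) i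
      linarith
    have e3 : (Matrix.diagonal y * K ℓ).mulVec wstar ⬝ᵥ (ustar + bstar • y - 1)
        = -((K ℓ).mulVec wstar ⬝ᵥ (∑ t, dstar t • K t).mulVec wstar) := by
      rw [hvec, dotProduct_neg, neg_inj]
      simp only [dotProduct]
      refine Finset.sum_congr rfl fun i _ => ?_
      rw [diag_mul_mulVec, diag_mul_mulVec]
      have h2 := hy2 i
      linear_combination (((K ℓ).mulVec wstar) i *
        ((∑ t, dstar t • K t).mulVec wstar) i) * h2
    have e4 : lamstar ⬝ᵥ (Matrix.diagonal y * K ℓ).mulVec wstar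
        = -(wstar ⬝ᵥ (K ℓ).mulVec wstar) := by
      simp only [dotProduct]
      rw [← Finset.sum_neg_distrib]
      refine Finset.sum_congr rfl fun i _ => ?_
      rw [diag_mul_mulVec]
      have h2 := hwlamc i
      linear_combination (((K ℓ).mulVec wstar) i) * h2
    rw [e1, e2, e3, e4] at heq0
    linarith
  -- additional sign facts
  have hw'y : ∀ i, wstar i * y i = -lamstar i := by
    intro i
    have h1 := hwlamc i
    have h2 := hy2 i
    linear_combination (y i) * h1 - lamstar i * h2
  have hsumw : ∑ i, wstar i = 0 := by
    have hyl' : ∑ i, y i * lamstar i = 0 := by simpa [dotProduct] using hyl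
    have hcongr : ∀ i ∈ Finset.univ, wstar i = -(y i * lamstar i) := fun i _ => by
      linarith [hwlamc i]
    rw [Finset.sum_congr rfl hcongr, Finset.sum_neg_distrib, hyl']
    ring
  have hlu : ∀ i, lamstar i * ustar i = 0 := by
    intro i
    rcases (hifacts i).2 with ⟨h1, _, _⟩ | ⟨h1, _⟩ <;> rw [h1] <;> ring
  have hlamneg : ∀ i, lamstar i ≤ 0 := by
    intro i
    rcases (hifacts i).2 with ⟨h1, h2, _⟩ | ⟨h1, _⟩
    · have h3 := hsr i
      rw [h1] at h3
      by_contra hpos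
      push_neg at hpos
      have h4 : 0 < lamstar i / ρ₁ := div_pos hpos hρ₁
      rw [h3] at h2
      linarith
    · rw [h1]
  have hq : ∀ ℓ, wstar ⬝ᵥ (K ℓ).mulVec wstar = 2 * (αstar + θstar ℓ) := by
    intro ℓ
    have h := hstat ℓ
    linarith
  -- assemble the conclusion
  refine ⟨hdz, ⟨hdnn, hsum1, fun ℓ => neg_nonneg.mpr (hθnp ℓ), fun ℓ => ?_, hfeas_star, hwlam,
    fun ℓ => by simpa using hstat ℓ, hyl, ?_⟩, ?_⟩
  · rcases hcompl3 ℓ with h | h <;> simp [h]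
  · -- the proximal global-minimality property
    intro v
    have hγeq : (1:ℝ) / (2 * (1 / ρ₁)) = ρ₁ / 2 := by
      rw [show (2 : ℝ) * (1 / ρ₁) = 2 / ρ₁ by ring, one_div_div]
    rw [hγeq, l0pos_eq_sum ustar C, l0pos_eq_sum v C, Finset.mul_sum, Finset.mul_sum,
      ← Finset.sum_add_distrib, ← Finset.sum_add_distrib]
    refine Finset.sum_le_sum fun i _ => ?_
    have hcase : (ustar i = 0 ∧ 0 ≤ sst i ∧ sst i ≤ Real.sqrt (2 * C / ρ₁))
        ∨ (lamstar i = 0 ∧ (sst i ≤ 0 ∨ Real.sqrt (2 * C / ρ₁) ≤ sst i)) := (hifacts i).2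
    have hP := prox_pointwise C ρ₁ (ustar i) (lamstar i) (sst i) (v i) hC hρ₁ (hsr i) hcase
    have e1 : ustar i - 1 / ρ₁ * lamstar i = sst i := by
      rw [hsr i]; ring
    rw [e1]
    exact hP
  · -- local minimality
    haveI : Nonempty (Fin m) := ⟨⟨0, Nat.lt_of_lt_of_le Nat.zero_lt_one hm⟩⟩
    set g : Fin m → ℝ := fun i => min (if 0 < ustar i then ustar i else 1)
      (if lamstar i < 0 then C / (-lamstar i) else 1) with hg_def
    have hgpos : ∀ i, 0 < g i := by
      intro i
      simp only [hg_def]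
      apply lt_min
      · split_ifs with h
        · exact h
        · norm_num
      · split_ifs with h
        · exact div_pos hC (by linarith)
        · norm_num
    set δ := Finset.univ.inf' Finset.univ_nonempty g with hδ_def
    have hδpos : 0 < δ := by
      rw [hδ_def, Finset.lt_inf'_iff]
      exact fun i _ => hgpos i
    have hδle : ∀ i, δ ≤ g i := fun i => Finset.inf'_le g (Finset.mem_univ i)
    refine ⟨δ, hδpos, ?_⟩
    rintro w' d' b' u' ⟨hd'nn, hd'sum, hcon'⟩ hdist
    have hdistu : ∀ i, |u' i - ustar i| < δ := by
      intro i
      have h1 : dist (u' i) (ustar i) ≤ dist u' ustar := dist_le_pi_dist u' ustar i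
      have h2 : dist u' ustar ≤ dist (b', u') (bstar, ustar) := by
        rw [Prod.dist_eq]; exact le_max_right _ _
      have h3 : dist (b', u') (bstar, ustar) ≤ dist (d', b', u') (dstar, bstar, ustar) := by
        rw [Prod.dist_eq]; exact le_max_right _ _
      have h4 : dist (d', b', u') (dstar, bstar, ustar)
          ≤ dist ((w', d', b', u') : (Fin m → ℝ) × (Fin L → ℝ) × ℝ × (Fin m → ℝ))
            (wstar, dstar, bstar, ustar) := by
        rw [Prod.dist_eq]; exact le_max_right _ _
      rw [← Real.dist_eq]
      linarith
    -- component formulas from the constraints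
    have hcomp' : ∀ i, ((∑ ℓ, d' ℓ • K ℓ).mulVec w') i = y i * (1 - u' i) - b' := by
      intro i
      have h := congrFun hcon' i
      simp only [Pi.add_apply, Pi.one_apply, Pi.smul_apply, smul_eq_mul] at h
      rw [diag_mul_mulVec] at h
      have h2 := hy2 i
      linear_combination (y i) * h - (((∑ ℓ, d' ℓ • K ℓ).mulVec w') i + b') * h2
    have hcompS : ∀ i, ((∑ ℓ, dstar ℓ • K ℓ).mulVec wstar) i = y i * (1 - ustar i) - bstar := by
      intro i
      have h0 := hrst0 i
      rw [hrst_i i, diag_mul_mulVec] at h0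
      have h2 := hy2 i
      linear_combination (y i) * h0 - (((∑ ℓ, dstar ℓ • K ℓ).mulVec wstar) i + bstar) * h2
    have hM'symm : (∑ ℓ, d' ℓ • K ℓ)ᵀ = ∑ ℓ, d' ℓ • K ℓ := by
      rw [Matrix.transpose_sum]
      exact Finset.sum_congr rfl fun ℓ _ => by rw [Matrix.transpose_smul, hKsymm ℓ]
    have hexp : w' ⬝ᵥ (∑ ℓ, d' ℓ • K ℓ).mulVec w'
        = (w' - wstar) ⬝ᵥ (∑ ℓ, d' ℓ • K ℓ).mulVec (w' - wstar)
          + 2 * (wstar ⬝ᵥ (∑ ℓ, d' ℓ • K ℓ).mulVec w')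
          - wstar ⬝ᵥ (∑ ℓ, d' ℓ • K ℓ).mulVec wstar := by
      have hsym := dot_mulVec_comm hM'symm w' wstar
      rw [Matrix.mulVec_sub, sub_dotProduct, dotProduct_sub,
        dotProduct_sub, hsym]
      ring
    have hcross : wstar ⬝ᵥ (∑ ℓ, d' ℓ • K ℓ).mulVec w'
        - wstar ⬝ᵥ (∑ ℓ, dstar ℓ • K ℓ).mulVec wstar = ∑ i, lamstar i * u' i := by
      simp only [dotProduct]
      rw [← Finset.sum_sub_distrib]
      have hper : ∀ i ∈ Finset.univ,
          wstar i * ((∑ ℓ, d' ℓ • K ℓ).mulVec w') i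
            - wstar i * ((∑ ℓ, dstar ℓ • K ℓ).mulVec wstar) i
          = lamstar i * u' i - lamstar i * ustar i + (bstar - b') * wstar i := by
        intro i _
        rw [hcomp' i, hcompS i]
        have h3 := hw'y i
        linear_combination (ustar i - u' i) * h3
      rw [Finset.sum_congr rfl hper, Finset.sum_add_distrib, Finset.sum_sub_distrib,
        ← Finset.mul_sum]
      have hlusum : ∑ i, lamstar i * ustar i = 0 := Finset.sum_eq_zero fun i _ => hlu i
      rw [hlusum, hsumw]
      ring
    have hdθ0 : ∑ ℓ, dstar ℓ * θstar ℓ = 0 := Finset.sum_eq_zero fun ℓ _ => by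
      rcases hcompl3 ℓ with h | h <;> rw [h] <;> ring
    have hdpart : wstar ⬝ᵥ (∑ ℓ, d' ℓ • K ℓ).mulVec wstar
        - wstar ⬝ᵥ (∑ ℓ, dstar ℓ • K ℓ).mulVec wstar = 2 * ∑ ℓ, d' ℓ * θstar ℓ := by
      rw [quad_sum, quad_sum, ← Finset.sum_sub_distrib]
      have hper : ∀ ℓ ∈ Finset.univ,
          d' ℓ * (wstar ⬝ᵥ (K ℓ).mulVec wstar) - dstar ℓ * (wstar ⬝ᵥ (K ℓ).mulVec wstar)
          = 2 * αstar * d' ℓ - 2 * αstar * dstar ℓ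
            + 2 * (d' ℓ * θstar ℓ) - 2 * (dstar ℓ * θstar ℓ) := by
        intro ℓ _
        rw [hq ℓ]
        ring
      rw [Finset.sum_congr rfl hper]
      rw [Finset.sum_sub_distrib, Finset.sum_add_distrib, Finset.sum_sub_distrib,
        ← Finset.mul_sum, ← Finset.mul_sum, ← Finset.mul_sum, ← Finset.mul_sum]
      rw [hd'sum, hsum1, hdθ0]
      ring
    have hpsd : 0 ≤ (w' - wstar) ⬝ᵥ (∑ ℓ, d' ℓ • K ℓ).mulVec (w' - wstar) := by
      rw [quad_sum]
      exact Finset.sum_nonneg fun ℓ _ => mul_nonneg (hd'nn ℓ) (quad_nonneg (hK ℓ).posSemidef _)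
    have hθpart : ∑ ℓ, d' ℓ * θstar ℓ ≤ 0 := by
      refine Finset.sum_nonpos fun ℓ _ => ?_
      have h := mul_le_mul_of_nonneg_left (hθnp ℓ) (hd'nn ℓ)
      simpa using h
    have hcount : 0 ≤ (∑ i, lamstar i * u' i) + C * l0pos u' - C * l0pos ustar := by
      rw [l0pos_eq_sum u' C, l0pos_eq_sum ustar C, ← Finset.sum_add_distrib,
        ← Finset.sum_sub_distrib]
      refine Finset.sum_nonneg fun i _ => ?_
      rcases eq_or_ne (lamstar i) 0 with hlzero | hlne
      · rw [hlzero, zero_mul, zero_add]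
        by_cases hu : 0 < ustar i
        · rw [if_pos hu]
          have hge : g i ≤ ustar i := by
            simp only [hg_def]
            exact le_trans (min_le_left _ _) (le_of_eq (if_pos hu))
          have habs := abs_lt.mp (hdistu i)
          have hpos : 0 < u' i := by linarith [hδle i, habs.1]
          rw [if_pos hpos]
          linarith
        · rw [if_neg hu]
          split_ifs with h <;> linarith
      · have hu0 : ustar i = 0 := by
          rcases mul_eq_zero.mp (hlu i) with h | h
          · exact absurd h hlne
          · exact h
        have hlneg : lamstar i < 0 := lt_of_le_of_ne (hlamneg i) hlne
        rw [hu0, if_neg (lt_irrefl (0:ℝ))]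
        by_cases hup : 0 < u' i
        · rw [if_pos hup]
          have hgle : g i ≤ C / (-lamstar i) := by
            simp only [hg_def]
            exact le_trans (min_le_right _ _) (le_of_eq (if_pos hlneg))
          have habs := abs_lt.mp (hdistu i)
          rw [hu0] at habs
          have hub : u' i < C / (-lamstar i) := by
            have := hδle i
            simp only [sub_zero] at habs
            linarith [habs.2]
          have hmul : u' i * (-lamstar i) < C := by
            rw [lt_div_iff₀ (neg_pos.mpr hlneg)] at hub
            linarith
          nlinarith
        · rw [if_neg hup]
          push_neg at hup
          nlinarith [mul_nonneg (neg_nonneg.mpr (hlamneg i)) (neg_nonneg.mpr hup)]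
    linarith [hexp, hcross, hdpart, hpsd, hθpart, hcount]
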